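/- arXiv:2512.02267 — 3 statements merged into one kernel-verified Lean document; each statement's English description precedes it below -/
import Mathlib

section
/- With N = 1 and n = 1, the quantity Z_1(x₁;q,t;a,b,c,d) = Σ_{μ⊆λ: λ₁≤1} [h_{1−λ₁}(ab;q) h_{λ'}(a,b;q) / ((q;q)_{1−λ₁} Π_{i≥1}(q;q)_{λ_i−λ_{i+1}})] · P_{λ/μ}(x₁;q,0) · t^{|μ|/2} h_{μ'}(c/√t,d/√t;q) equals (1+ab+ac+ad+bc+bd+cd+abcd + (a+b+c+d+abc+abd+acd+bcd)x₁) / ((1−q)(1−t)), interpreting the sum over partitions λ = (1^k) and μ ⊆ λ as a convergent geometric series in t. -/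
open Finset

noncomputable section

/-- the `N = 1`, `n = 1` evaluation of `Z_1(x₁;q,t;a,b,c,d)`.
The sum over pairs `μ ⊆ λ` with `λ₁ ≤ 1` (so `λ = (1^k)` and `μ ∈ {(1^k),(1^{k-1})}`)
is parametrized by `k`; with `s = √t` the summand for given `k` is
`prefac(k) * (B k + B (k-1) * x₁)` where `prefac(k) = (a+b)/(1-q)` for `k` odd and
`(1+ab)/(1-q)` for `k` even (including the `h_{1-λ₁}(ab;q)/(q;q)_{1-λ₁}` factor at
`k = 0`), and `B j = t^{j/2} h_{(j)'... }(c/√t,d/√t;q)` is the boundary factor of `μ = (1^j)`.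
The total equals the stated symmetric rational expression. -/
theorem Z_one_explicit (q s a b c d x : ℂ) (hq : q ≠ 1) (hs0 : s ≠ 0) (hs : ‖s‖ < 1) :
    let B : ℕ → ℂ := fun j =>
      if j = 0 then 1
      else if j % 2 = 1 then s ^ (j - 1) * (c + d)
      else s ^ j * (1 + c * d / s ^ 2)
    (∑' k : ℕ,
        ((if k % 2 = 1 then a + b else 1 + a * b) / (1 - q)) *
          (B k + if k = 0 then 0 else B (k - 1) * x))
      = (1 + a*b + a*c + a*d + b*c + b*d + c*d + a*b*c*d
          + (a + b + c + d + a*b*c + a*b*d + a*c*d + b*c*d) * x) / ((1 - q) * (1 - s ^ 2)) := by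
  intro B
  have hB : B = fun j =>
      if j = 0 then (1 : ℂ)
      else if j % 2 = 1 then s ^ (j - 1) * (c + d)
      else s ^ j * (1 + c * d / s ^ 2) := rfl
  set F : ℕ → ℂ := fun k =>
    ((if k % 2 = 1 then a + b else 1 + a * b) / (1 - q)) *
      (B k + if k = 0 then 0 else B (k - 1) * x) with hF
  have hs2 : ‖s ^ 2‖ < 1 := by
    rw [norm_pow]
    nlinarith [norm_nonneg s]
  have hs2ne : (1 : ℂ) - s ^ 2 ≠ 0 := by
    intro h
    have hs1 : ‖s ^ 2‖ = 1 := by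
      have : s ^ 2 = 1 := by linear_combination -h
      rw [this]; simp
    rw [hs1] at hs2; linarith
  have hq' : (1 : ℂ) - q ≠ 0 := sub_ne_zero.mpr (Ne.symm hq)
  set c2 : ℂ := ((1 + a*b) / (1 - q)) * ((s^2 + c*d) + (c+d)*x) with hc2
  set c3 : ℂ := ((a + b) / (1 - q)) * (s^2*(c+d) + (s^2 + c*d)*x) with hc3
  have h2 : ∀ k : ℕ, F (2*(k+1)) = (s^2)^k * c2 := by
    intro k
    have e0 : 2*(k+1) ≠ 0 := by omega
    have e1 : 2*(k+1) % 2 = 0 := by omega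
    have e2 : (2*(k+1)-1) % 2 = 1 := by omega
    have e3 : 2*(k+1)-1 ≠ 0 := by omega
    have e4 : 2*(k+1)-1-1 = 2*k := by omega
    simp only [hF, hB, e0, e1, e2, e3, e4, if_false, if_true, if_neg, if_pos]
    norm_num
    rw [hc2]
    have h2k : (2*(k+1)) = 2*k + 2 := by omega
    rw [h2k]
    field_simp
    ring
  have h3 : ∀ k : ℕ, F (2*(k+1)+1) = (s^2)^k * c3 := by
    intro k
    have e0 : 2*(k+1)+1 ≠ 0 := by omega
    have e1 : (2*(k+1)+1) % 2 = 1 := by omega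
    have e3 : 2*(k+1)+1-1 = 2*(k+1) := by omega
    have e4 : 2*(k+1) ≠ 0 := by omega
    simp only [hF, hB, e3]
    rw [if_pos e1, if_neg e0, if_neg e4]
    rw [if_neg (by omega : ¬ 2*(k+1) % 2 = 1)]
    rw [if_pos e1, if_neg e0, hc3]
    have h2k : (2*(k+1)) = 2*k + 2 := by omega
    rw [h2k]
    field_simp
    ring
  have hgeo : Summable (fun k : ℕ => (s^2)^k) := summable_geometric_of_norm_lt_one hs2
  have hgeos : ∑' k : ℕ, (s^2)^k = (1 - s^2)⁻¹ := tsum_geometric_of_norm_lt_one hs2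
  have hS2 : Summable (fun k : ℕ => F (2*(k+1))) := by
    simpa only [h2] using hgeo.mul_right c2
  have hS3 : Summable (fun k : ℕ => F (2*(k+1)+1)) := by
    simpa only [h3] using hgeo.mul_right c3
  have hE : Summable (fun k : ℕ => F (2*k)) := by
    refine (summable_nat_add_iff 1).mp ?_
    convert hS2 using 2 with k
  have hO : Summable (fun k : ℕ => F (2*k+1)) := by
    refine (summable_nat_add_iff 1).mp ?_
    convert hS3 using 2 with k
  have hsplit : (∑' k : ℕ, F (2*k)) + (∑' k : ℕ, F (2*k+1)) = ∑' k : ℕ, F k :=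
    tsum_even_add_odd hE hO
  have hEval2 : (∑' k : ℕ, F (2*k)) = F 0 + c2 * (1 - s^2)⁻¹ := by
    rw [Summable.tsum_eq_zero_add hE]
    congr 1
    have : (fun k : ℕ => F (2*(k+1))) = fun k : ℕ => (s^2)^k * c2 := funext h2
    calc (∑' k : ℕ, F (2*(k+1))) = ∑' k : ℕ, (s^2)^k * c2 := by rw [this]
      _ = (∑' k : ℕ, (s^2)^k) * c2 := tsum_mul_right
      _ = c2 * (1 - s^2)⁻¹ := by rw [hgeos]; ring
  have hEval3 : (∑' k : ℕ, F (2*k+1)) = F 1 + c3 * (1 - s^2)⁻¹ := by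
    rw [Summable.tsum_eq_zero_add hO]
    congr 1
    have : (fun k : ℕ => F (2*(k+1)+1)) = fun k : ℕ => (s^2)^k * c3 := funext h3
    calc (∑' k : ℕ, F (2*(k+1)+1)) = ∑' k : ℕ, (s^2)^k * c3 := by rw [this]
      _ = (∑' k : ℕ, (s^2)^k) * c3 := tsum_mul_right
      _ = c3 * (1 - s^2)⁻¹ := by rw [hgeos]; ring
  have hF0 : F 0 = (1 + a*b) / (1 - q) := by
    simp [hF, hB]
  have hF1 : F 1 = ((a + b) / (1 - q)) * ((c + d) + x) := by
    simp [hF, hB]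
  rw [← hsplit, hEval2, hEval3, hF0, hF1, hc2, hc3]
  field_simp
  ring
end
end

section
/- (Type D inversion symmetry, one-variable version) For every partition μ and integers n ≥ μ₁, (xy)^n Σ_{λ: λ₁≤n, λ even} [1/(q;q)_{n−λ₁}] Q_{λ/μ}(x^{−1},y^{−1};q,0) = Σ_{λ: λ₁≤n, λ even} [1/(q;q)_{n−λ₁}] Q_{λ/μ}(x,y;q,0), as an identity of Laurent polynomials in x,y over ℚ(q). Equivalently (after reduction via the a=0 evaluation), (xy)^n Σ_{λ: λ₁≤n} [x^{−odd(λ')} y^{−|λ/μ|}/(q;q)_{n−λ₁}] c_{λ/μ}(q) = Σ_{λ: λ₁≤n} [x^{odd(λ')} y^{|λ/μ|}/(q;q)_{n−λ₁}] c_{λ/μ}(q), where c_{λ/μ}(q) = Π_i (q;q)_{μ_i−μ_{i+1}}/((q;q)_{λ_i−μ_i}(q;q)_{μ_i−λ_{i+1}}) (with μ₀ := n), and the sum is over λ interlacing with μ (μ_{i} ≤ λ_i ≤ μ_{i−1}). -/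
open Finset
open scoped Classical

noncomputable section

variable {K : Type*} [Field K]

/-- `qPochQ q m = (q;q)_m = ∏_{i=1}^m (1 - q^i)`. -/
def qPochQ (q : K) (m : ℕ) : K := ∏ i ∈ Finset.range m, (1 - q ^ (i + 1))

/-- Partitions bounded in length and part size, encoded by tuples. -/
def lamOf {m c : ℕ} (g : Fin m → Fin c) : ℕ → ℕ := fun i => if h : i < m then (g ⟨i, h⟩ : ℕ) else 0

/-- `odd(λ')`: the number of odd columns of `λ`. -/
def oddCols (R : ℕ) (f : ℕ → ℕ) : ℕ := ∑ k ∈ Finset.range R, (f (2 * k) - f (2 * k + 1))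

lemma qPochQ_zero (q : K) : qPochQ q 0 = 1 := by simp [qPochQ]

lemma tele_aux (v : ℕ → ℕ) (hv : ∀ i, v (i + 1) ≤ v i) :
    ∀ k, ∑ i ∈ Finset.range k, (v i - v (i + 1)) = v 0 - v k := by
  have hv0 : ∀ k, v k ≤ v 0 := by
    intro k
    induction k with
    | zero => exact le_rfl
    | succ m ih => exact le_trans (hv m) ih
  intro k
  induction k with
  | zero => simp
  | succ m ih =>
    rw [Finset.sum_range_succ, ih]
    have h1 := hv m
    have h2 := hv0 m
    have h3 := hv0 (m + 1)
    omega

lemma pow_inv_cancel_aux (z : K) (hz : z ≠ 0) (n a : ℕ) (ha : a ≤ n) :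
    z ^ n * z⁻¹ ^ a = z ^ (n - a) := by
  have h : z ^ n = z ^ (n - a) * z ^ a := by rw [← pow_add, Nat.sub_add_cancel ha]
  rw [h, inv_pow, mul_assoc, mul_inv_cancel₀ (pow_ne_zero _ hz), mul_one]

/-- type D inversion symmetry, one-variable version, explicit form:
for every partition `μ` with `μ₁ ≤ n`, setting `μ₀ := n`,
`(xy)^n ∑_λ x^{−odd(λ')} y^{−|λ/μ|} c_{λ/μ}(q) /(q;q)_{n−λ₁}
   = ∑_λ x^{odd(λ')} y^{|λ/μ|} c_{λ/μ}(q) /(q;q)_{n−λ₁}`,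
where `c_{λ/μ}(q) = ∏_i (q;q)_{μ_i−μ_{i+1}}/((q;q)_{λ_i−μ_i}(q;q)_{μ_i−λ_{i+1}})` and the sum
is over `λ` interlacing `μ`, i.e. `μ_i ≤ λ_i ≤ μ_{i−1}` (with `μ₀ = n`), encoded by tuples. -/
theorem typeD_inversion_symmetry (q x y : K) (hq : ∀ j : ℕ, qPochQ q j ≠ 0)
    (hx : x ≠ 0) (hy : y ≠ 0)
    (n L : ℕ) (μ : ℕ → ℕ) (hμanti : ∀ i, μ (i + 1) ≤ μ i) (hμ0 : ∀ i, L ≤ i → μ i = 0)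
    (hμn : μ 0 ≤ n) :
    let μprev : ℕ → ℕ := fun i => match i with | 0 => n | j + 1 => μ j
    let interlace : (ℕ → ℕ) → Prop := fun f => ∀ i, μ i ≤ f i ∧ f i ≤ μprev i
    let cLM : (ℕ → ℕ) → K := fun f =>
      ∏ i ∈ Finset.range (L + 1),
        qPochQ q (μ i - μ (i + 1)) / (qPochQ q (f i - μ i) * qPochQ q (μ i - f (i + 1)))
    (x * y) ^ n *
      (∑ g : Fin (L + 1) → Fin (n + 1),
        if interlace (lamOf g) then
          x⁻¹ ^ oddCols (L + 1) (lamOf g)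
            * y⁻¹ ^ (∑ i ∈ Finset.range (L + 1), (lamOf g i - μ i))
            / qPochQ q (n - lamOf g 0) * cLM (lamOf g)
        else 0)
      = ∑ g : Fin (L + 1) → Fin (n + 1),
          if interlace (lamOf g) then
            x ^ oddCols (L + 1) (lamOf g)
              * y ^ (∑ i ∈ Finset.range (L + 1), (lamOf g i - μ i))
              / qPochQ q (n - lamOf g 0) * cLM (lamOf g)
          else 0 := by
  intro μprev interlace cLM
  have hμanti' : ∀ i j, i ≤ j → μ j ≤ μ i := fun i j h =>
    (antitone_nat_of_succ_le hμanti) h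
  have hμn' : ∀ i, μ i ≤ n := fun i => le_trans (hμanti' 0 i (Nat.zero_le _)) hμn
  have hμprev_succ : ∀ i, μprev (i + 1) = μ i := fun i => rfl
  have hμprev0 : μprev 0 = n := rfl
  have hμprev_le : ∀ i, μprev i ≤ n := by
    intro i
    cases i with
    | zero => exact le_rfl
    | succ j => exact hμn' j
  have hμμprev : ∀ i, μ i ≤ μprev i := by
    intro i
    cases i with
    | zero => exact hμn
    | succ j => exact hμanti j
  -- the complementation map
  set G : (Fin (L + 1) → Fin (n + 1)) → (Fin (L + 1) → Fin (n + 1)) :=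
    fun g i => ⟨min n (μ (i : ℕ) + (μprev (i : ℕ) - (g i : ℕ))),
      Nat.lt_succ_of_le (Nat.min_le_left _ _)⟩ with hGdef
  have hlam_lt : ∀ (g : Fin (L + 1) → Fin (n + 1)) (i : Fin (L + 1)),
      lamOf g (i : ℕ) = (g i : ℕ) := by
    intro g i
    simp [lamOf, i.isLt]
  have hlam_ge : ∀ (g : Fin (L + 1) → Fin (n + 1)) (i : ℕ), L + 1 ≤ i → lamOf g i = 0 := by
    intro g i h
    simp only [lamOf]
    rw [dif_neg (by omega)]
  have hlam_le : ∀ (g : Fin (L + 1) → Fin (n + 1)) (i : ℕ), lamOf g i ≤ n := by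
    intro g i
    by_cases h : i < L + 1
    · rw [show lamOf g i = (g ⟨i, h⟩ : ℕ) from hlam_lt g ⟨i, h⟩]
      exact Nat.lt_succ_iff.mp (g ⟨i, h⟩).isLt
    · rw [hlam_ge g i (by omega)]
      exact Nat.zero_le _
  -- the key pointwise formula for the complement
  have key : ∀ (g : Fin (L + 1) → Fin (n + 1)), interlace (lamOf g) →
      ∀ i : ℕ, lamOf (G g) i = μ i + (μprev i - lamOf g i) := by
    intro g hg i
    by_cases h : i < L + 1
    · have e1 : lamOf (G g) i = (G g ⟨i, h⟩ : ℕ) := hlam_lt (G g) ⟨i, h⟩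
      have e2 : lamOf g i = (g ⟨i, h⟩ : ℕ) := hlam_lt g ⟨i, h⟩
      have hgi := hg i
      have hle := hμprev_le i
      rw [e1]
      show min n (μ i + (μprev i - (g ⟨i, h⟩ : ℕ))) = μ i + (μprev i - lamOf g i)
      rw [← e2]
      rw [Nat.min_def]
      split_ifs <;> omega
    · obtain ⟨j, rfl⟩ : ∃ j, i = j + 1 := ⟨i - 1, by omega⟩
      rw [hlam_ge g _ (by omega), hlam_ge (G g) _ (by omega), hμprev_succ,
        hμ0 j (by omega), hμ0 (j + 1) (by omega)]
  have hGint : ∀ g, interlace (lamOf g) → interlace (lamOf (G g)) := by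
    intro g hg i
    have hk := key g hg i
    have hgi := hg i
    omega
  have hGG : ∀ g, interlace (lamOf g) → G (G g) = g := by
    intro g hg
    funext i
    apply Fin.ext
    have h1 := key g hg (i : ℕ)
    have h2 := key (G g) (hGint g hg) (i : ℕ)
    have h3 := hg (i : ℕ)
    rw [← hlam_lt (G (G g)) i, ← hlam_lt g i]
    omega
  -- sum of parts identity
  have hsum : ∀ g, interlace (lamOf g) →
      (∑ i ∈ Finset.range (L + 1), (lamOf g i - μ i)) ≤ n ∧
      (∑ i ∈ Finset.range (L + 1), (lamOf (G g) i - μ i))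
        = n - ∑ i ∈ Finset.range (L + 1), (lamOf g i - μ i) := by
    intro g hg
    have hadd : ∑ i ∈ Finset.range (L + 1),
        ((lamOf (G g) i - μ i) + (lamOf g i - μ i)) = n := by
      have hterm : ∀ i ∈ Finset.range (L + 1),
          (lamOf (G g) i - μ i) + (lamOf g i - μ i) = μprev i - μprev (i + 1) := by
        intro i _
        have hk := key g hg i
        have hgi := hg i
        have h5 := hμprev_succ i
        omega
      rw [Finset.sum_congr rfl hterm, tele_aux μprev (fun i => le_trans
        (le_of_eq (hμprev_succ i)) (hμμprev i)) (L + 1), hμprev_succ, hμ0 L le_rfl]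
      omega
    rw [Finset.sum_add_distrib] at hadd
    omega
  -- odd columns identity
  have hodd : ∀ g, interlace (lamOf g) →
      oddCols (L + 1) (lamOf g) ≤ n ∧
      oddCols (L + 1) (lamOf (G g)) = n - oddCols (L + 1) (lamOf g) := by
    intro g hg
    have hadd : ∑ k ∈ Finset.range (L + 1),
        ((lamOf (G g) (2 * k) - lamOf (G g) (2 * k + 1))
          + (lamOf g (2 * k) - lamOf g (2 * k + 1))) = n := by
      have hterm : ∀ k ∈ Finset.range (L + 1),
          (lamOf (G g) (2 * k) - lamOf (G g) (2 * k + 1))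
            + (lamOf g (2 * k) - lamOf g (2 * k + 1))
          = (fun k => μprev (2 * k)) k - (fun k => μprev (2 * k)) (k + 1) := by
        intro k _
        simp only
        have h1 := key g hg (2 * k)
        have h2 := key g hg (2 * k + 1)
        have h3 := hg (2 * k)
        have h4 := hg (2 * k + 1)
        have h5 : μprev (2 * k + 1) = μ (2 * k) := hμprev_succ _
        have h6 : μprev (2 * (k + 1)) = μ (2 * k + 1) := by
          rw [show 2 * (k + 1) = (2 * k + 1) + 1 by ring, hμprev_succ]
        omega
      have hv : ∀ k, μprev (2 * (k + 1)) ≤ μprev (2 * k) := by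
        intro k
        have h6 : μprev (2 * (k + 1)) = μ (2 * k + 1) := by
          rw [show 2 * (k + 1) = (2 * k + 1) + 1 by ring, hμprev_succ]
        rw [h6]
        exact le_trans (hμanti' (2 * k) (2 * k + 1) (by omega)) (hμμprev (2 * k))
      rw [Finset.sum_congr rfl hterm, tele_aux (fun k => μprev (2 * k)) hv (L + 1)]
      simp only [Nat.mul_zero]
      have h6 : μprev (2 * (L + 1)) = μ (2 * L + 1) := by
        rw [show 2 * (L + 1) = (2 * L + 1) + 1 by ring, hμprev_succ]
      rw [hμprev0, h6, hμ0 (2 * L + 1) (by omega)]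
      omega
    unfold oddCols
    rw [Finset.sum_add_distrib] at hadd
    omega
  -- the c_{λ/μ} identity under complementation
  have unfold_cLM : ∀ f : ℕ → ℕ, cLM f = ∏ i ∈ Finset.range (L + 1),
      qPochQ q (μ i - μ (i + 1)) / (qPochQ q (f i - μ i) * qPochQ q (μ i - f (i + 1))) :=
    fun _ => rfl
  have hc : ∀ g, interlace (lamOf g) →
      cLM (lamOf (G g)) / qPochQ q (n - lamOf (G g) 0)
        = cLM (lamOf g) / qPochQ q (n - lamOf g 0) := by
    intro g hg
    have hft0 : n - lamOf (G g) 0 = lamOf g 0 - μ 0 := by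
      have h1 := key g hg 0
      have h2 := hg 0
      have h3 : μprev 0 = n := rfl
      have h4 := hlam_le g 0
      omega
    have e1 : cLM (lamOf (G g)) = ∏ i ∈ Finset.range (L + 1),
        qPochQ q (μ i - μ (i + 1))
          / (qPochQ q (μprev i - lamOf g i) * qPochQ q (lamOf g (i + 1) - μ (i + 1))) := by
      rw [unfold_cLM]
      apply Finset.prod_congr rfl
      intro i _
      have h1 := key g hg i
      have h2 := key g hg (i + 1)
      have h3 := hg i
      have h4 := hg (i + 1)
      have h5 := hμprev_succ i
      rw [show lamOf (G g) i - μ i = μprev i - lamOf g i by omega,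
        show μ i - lamOf (G g) (i + 1) = lamOf g (i + 1) - μ (i + 1) by omega]
    rw [e1, unfold_cLM (lamOf g)]
    rw [Finset.prod_div_distrib, Finset.prod_div_distrib,
      Finset.prod_mul_distrib, Finset.prod_mul_distrib, hft0, div_div, div_div]
    congr 1
    -- equality of denominators
    have d1 : ∏ i ∈ Finset.range (L + 1), qPochQ q (μprev i - lamOf g i)
        = (∏ i ∈ Finset.range L, qPochQ q (μ i - lamOf g (i + 1)))
          * qPochQ q (n - lamOf g 0) := by
      rw [Finset.prod_range_succ']
    have d2a : ∏ i ∈ Finset.range (L + 1 + 1), qPochQ q (lamOf g i - μ i)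
        = (∏ i ∈ Finset.range (L + 1), qPochQ q (lamOf g (i + 1) - μ (i + 1)))
          * qPochQ q (lamOf g 0 - μ 0) :=
      Finset.prod_range_succ' (fun i => qPochQ q (lamOf g i - μ i)) (L + 1)
    have d2b : ∏ i ∈ Finset.range (L + 1 + 1), qPochQ q (lamOf g i - μ i)
        = ∏ i ∈ Finset.range (L + 1), qPochQ q (lamOf g i - μ i) := by
      rw [Finset.prod_range_succ, hlam_ge g (L + 1) le_rfl, hμ0 (L + 1) (by omega),
        qPochQ_zero, mul_one]
    have d2 : (∏ i ∈ Finset.range (L + 1), qPochQ q (lamOf g (i + 1) - μ (i + 1)))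
        * qPochQ q (lamOf g 0 - μ 0)
        = ∏ i ∈ Finset.range (L + 1), qPochQ q (lamOf g i - μ i) := d2a.symm.trans d2b
    have d3 : ∏ i ∈ Finset.range (L + 1), qPochQ q (μ i - lamOf g (i + 1))
        = ∏ i ∈ Finset.range L, qPochQ q (μ i - lamOf g (i + 1)) := by
      rw [Finset.prod_range_succ, hlam_ge g (L + 1) le_rfl, hμ0 L le_rfl,
        qPochQ_zero, mul_one]
    calc (∏ i ∈ Finset.range (L + 1), qPochQ q (μprev i - lamOf g i))
          * (∏ i ∈ Finset.range (L + 1), qPochQ q (lamOf g (i + 1) - μ (i + 1)))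
          * qPochQ q (lamOf g 0 - μ 0)
        = (∏ i ∈ Finset.range (L + 1), qPochQ q (μprev i - lamOf g i))
          * ((∏ i ∈ Finset.range (L + 1), qPochQ q (lamOf g (i + 1) - μ (i + 1)))
            * qPochQ q (lamOf g 0 - μ 0)) := by ring
      _ = (∏ i ∈ Finset.range L, qPochQ q (μ i - lamOf g (i + 1)))
          * qPochQ q (n - lamOf g 0)
          * (∏ i ∈ Finset.range (L + 1), qPochQ q (lamOf g i - μ i)) := by rw [d1, d2]
      _ = (∏ i ∈ Finset.range (L + 1), qPochQ q (lamOf g i - μ i))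
          * (∏ i ∈ Finset.range (L + 1), qPochQ q (μ i - lamOf g (i + 1)))
          * qPochQ q (n - lamOf g 0) := by rw [d3]; ring
  -- assemble
  rw [Finset.mul_sum]
  have lhs_filter : (∑ g : Fin (L + 1) → Fin (n + 1),
      (x * y) ^ n * (if interlace (lamOf g) then
        x⁻¹ ^ oddCols (L + 1) (lamOf g)
          * y⁻¹ ^ (∑ i ∈ Finset.range (L + 1), (lamOf g i - μ i))
          / qPochQ q (n - lamOf g 0) * cLM (lamOf g)
      else 0))
      = ∑ g ∈ Finset.univ.filter (fun g : Fin (L + 1) → Fin (n + 1) => interlace (lamOf g)),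
        (x * y) ^ n * (x⁻¹ ^ oddCols (L + 1) (lamOf g)
          * y⁻¹ ^ (∑ i ∈ Finset.range (L + 1), (lamOf g i - μ i))
          / qPochQ q (n - lamOf g 0) * cLM (lamOf g)) := by
    rw [Finset.sum_filter]
    apply Finset.sum_congr rfl
    intro g _
    by_cases h : interlace (lamOf g) <;> simp [h]
  have rhs_filter : (∑ g : Fin (L + 1) → Fin (n + 1),
      if interlace (lamOf g) then
        x ^ oddCols (L + 1) (lamOf g)
          * y ^ (∑ i ∈ Finset.range (L + 1), (lamOf g i - μ i))
          / qPochQ q (n - lamOf g 0) * cLM (lamOf g)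
      else 0)
      = ∑ g ∈ Finset.univ.filter (fun g : Fin (L + 1) → Fin (n + 1) => interlace (lamOf g)),
        x ^ oddCols (L + 1) (lamOf g)
          * y ^ (∑ i ∈ Finset.range (L + 1), (lamOf g i - μ i))
          / qPochQ q (n - lamOf g 0) * cLM (lamOf g) := by
    rw [Finset.sum_filter]
  rw [lhs_filter, rhs_filter]
  refine Finset.sum_nbij' G G ?_ ?_ ?_ ?_ ?_
  · intro g hg
    simp only [Finset.mem_filter, Finset.mem_univ, true_and] at hg ⊢
    exact hGint g hg
  · intro g hg
    simp only [Finset.mem_filter, Finset.mem_univ, true_and] at hg ⊢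
    exact hGint g hg
  · intro g hg
    simp only [Finset.mem_filter, Finset.mem_univ, true_and] at hg
    exact hGG g hg
  · intro g hg
    simp only [Finset.mem_filter, Finset.mem_univ, true_and] at hg
    exact hGG g hg
  · intro g hg
    simp only [Finset.mem_filter, Finset.mem_univ, true_and] at hg
    obtain ⟨hb, hsumeq⟩ := hsum g hg
    obtain ⟨ha, hoddeq⟩ := hodd g hg
    set a := oddCols (L + 1) (lamOf g) with hadef
    set b := ∑ i ∈ Finset.range (L + 1), (lamOf g i - μ i) with hbdef
    calc (x * y) ^ n * (x⁻¹ ^ a * y⁻¹ ^ b / qPochQ q (n - lamOf g 0) * cLM (lamOf g))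
        = (x ^ n * x⁻¹ ^ a) * (y ^ n * y⁻¹ ^ b)
          * (cLM (lamOf g) / qPochQ q (n - lamOf g 0)) := by rw [mul_pow]; ring
      _ = x ^ (n - a) * y ^ (n - b)
          * (cLM (lamOf (G g)) / qPochQ q (n - lamOf (G g) 0)) := by
          rw [pow_inv_cancel_aux x hx n a ha, pow_inv_cancel_aux y hy n b hb, hc g hg]
      _ = x ^ oddCols (L + 1) (lamOf (G g))
          * y ^ (∑ i ∈ Finset.range (L + 1), (lamOf (G g) i - μ i))
          / qPochQ q (n - lamOf (G g) 0) * cLM (lamOf (G g)) := by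
          rw [hoddeq, hsumeq]; ring
end
end

section
/- (Residue at y_n = 1 of the symmetrized integrand) Let I_n(y;q,t) = (1−q)^{−n} Π_{i≠j} (y_i−y_j)/(y_i−q y_j) · Π_i y_i/((y_i²−1)(1−t y_i²)) · Π_{i<j} (y_i y_j − q)(1 − qt y_i y_j)/((y_i y_j − 1)(1 − t y_i y_j)) · Π_{i=1}^n Π_{j=1}^N (1 + y_i x_j). Then Res_{y_n = 1} I_n(y;q,t) = I_{n−1}(y₁,…,y_{n−1};q,t) · [1/(2(1−q)(1−t))] · Π_{1≤i<n} [(1−y_i)(1−qt y_i)/((1−q y_i)(1−t y_i))] · Π_{j=1}^N (1+x_j), as an identity of rational functions. -/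
open Finset Filter
open scoped Topology

noncomputable section

/-- The symmetrized integrand
`I_n(y;q,t) = (1−q)^{−n} ∏_{i≠j} (y_i−y_j)/(y_i−qy_j) · ∏_i y_i/((y_i²−1)(1−ty_i²))
  · ∏_{i<j} (y_iy_j−q)(1−qty_iy_j)/((y_iy_j−1)(1−ty_iy_j)) · ∏_{i,j} (1+y_ix_j)`. -/
def Iden (q t : ℂ) {n N : ℕ} (x : Fin N → ℂ) (y : Fin n → ℂ) : ℂ :=
  ((1 - q) ^ n)⁻¹ *
    (∏ i, ∏ j, if i ≠ j then (y i - y j) / (y i - q * y j) else 1) *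
    (∏ i, y i / ((y i ^ 2 - 1) * (1 - t * y i ^ 2))) *
    (∏ i, ∏ j, if i < j then
        (y i * y j - q) * (1 - q * t * y i * y j) / ((y i * y j - 1) * (1 - t * y i * y j))
      else 1) *
    ∏ i, ∏ j, (1 + y i * x j)

private lemma contSnoc (m : ℕ) (y : Fin m → ℂ) (i : Fin (m+1)) :
    Continuous (fun w : ℂ => (Fin.snoc y w : Fin (m+1) → ℂ) i) := by
  induction i using Fin.lastCases with
  | last => simpa using continuous_id'
  | cast i => simpa using continuous_const

private lemma contAt_prod {ι : Type*} (s : Finset ι) (f : ι → ℂ → ℂ) (a : ℂ)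
    (h : ∀ i ∈ s, ContinuousAt (f i) a) : ContinuousAt (fun w => ∏ i ∈ s, f i w) a :=
  tendsto_finset_prod s h

set_option maxHeartbeats 2000000 in
/-- residue at `y_n = 1` of the symmetrized integrand:
at generic values of the remaining variables,
`Res_{y_n=1} I_n(y;q,t)
  = I_{n−1}(y₁,…,y_{n−1};q,t) · 1/(2(1−q)(1−t))
      · ∏_{i<n} (1−y_i)(1−qty_i)/((1−qy_i)(1−ty_i)) · ∏_j (1+x_j)`,
where the residue of the simple pole is the limit of `(w−1)·I_n(y₁,…,y_{n−1},w)` as `w → 1`. -/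
theorem residue_at_one (m N : ℕ) (q t : ℂ) (x : Fin N → ℂ) (y : Fin m → ℂ)
    (hq : (1 : ℂ) - q ≠ 0) (ht : (1 : ℂ) - t ≠ 0)
    (h1 : ∀ i, y i ≠ 1) (h2 : ∀ i, y i - q ≠ 0) (h3 : ∀ i, 1 - q * y i ≠ 0)
    (h4 : ∀ i, 1 - t * y i ≠ 0)
    (h5 : ∀ i j, i ≠ j → y i - q * y j ≠ 0)
    (h6 : ∀ i, (y i) ^ 2 - 1 ≠ 0) (h7 : ∀ i, 1 - t * (y i) ^ 2 ≠ 0)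
    (h8 : ∀ i j, i < j → y i * y j - 1 ≠ 0)
    (h9 : ∀ i j, i < j → 1 - t * (y i) * (y j) ≠ 0) :
    Tendsto (fun w : ℂ => (w - 1) * Iden q t x (Fin.snoc y w)) (𝓝[≠] (1 : ℂ))
      (𝓝 (Iden q t x y * (1 / (2 * (1 - q) * (1 - t)))
        * (∏ i, (1 - y i) * (1 - q * t * y i) / ((1 - q * y i) * (1 - t * y i)))
        * ∏ j, (1 + x j))) := by
  set G : ℂ → ℂ := fun w =>
    ((1 - q) ^ (m+1))⁻¹ *
      (∏ i, ∏ j, if i ≠ j then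
          ((Fin.snoc y w : Fin (m+1) → ℂ) i - (Fin.snoc y w : Fin (m+1) → ℂ) j) /
            ((Fin.snoc y w : Fin (m+1) → ℂ) i - q * (Fin.snoc y w : Fin (m+1) → ℂ) j)
        else 1) *
      ((∏ i : Fin m, y i / ((y i ^ 2 - 1) * (1 - t * y i ^ 2))) *
        (w / ((w + 1) * (1 - t * w ^ 2)))) *
      (∏ i, ∏ j, if i < j then
          ((Fin.snoc y w : Fin (m+1) → ℂ) i * (Fin.snoc y w : Fin (m+1) → ℂ) j - q) *
            (1 - q * t * (Fin.snoc y w : Fin (m+1) → ℂ) i * (Fin.snoc y w : Fin (m+1) → ℂ) j) /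
            (((Fin.snoc y w : Fin (m+1) → ℂ) i * (Fin.snoc y w : Fin (m+1) → ℂ) j - 1) *
              (1 - t * (Fin.snoc y w : Fin (m+1) → ℂ) i * (Fin.snoc y w : Fin (m+1) → ℂ) j))
        else 1) *
      ∏ i, ∏ j, (1 + (Fin.snoc y w : Fin (m+1) → ℂ) i * x j) with hG
  -- pointwise equality away from 1
  have heq : ∀ᶠ w in 𝓝[≠] (1:ℂ), (w - 1) * Iden q t x (Fin.snoc y w) = G w := by
    filter_upwards [self_mem_nhdsWithin] with w hw
    have hw1 : w - 1 ≠ 0 := sub_ne_zero.mpr hw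
    have hmid : (∏ i : Fin (m+1), ((Fin.snoc y w : Fin (m+1) → ℂ) i) /
          ((((Fin.snoc y w : Fin (m+1) → ℂ) i)^2 - 1)*(1 - t*((Fin.snoc y w : Fin (m+1) → ℂ) i)^2)))
        = (∏ i : Fin m, y i / ((y i^2-1)*(1-t*y i^2))) * (w/((w^2-1)*(1-t*w^2))) := by
      simp [Fin.prod_univ_castSucc]
      rw [div_mul_div_comm]
    have key : (w-1) * (w/((w^2-1)*(1-t*w^2))) = w/((w+1)*(1-t*w^2)) := by
      rw [show w^2-1 = (w-1)*(w+1) by ring, mul_assoc (w-1), mul_div_assoc',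
        mul_div_mul_left _ _ hw1]
    rw [Iden]
    simp only [hG]
    rw [hmid, ← key]
    ring
  -- nonvanishing of denominators at w = 1
  have hden2 : ∀ i j : Fin (m + 1), i ≠ j →
      (Fin.snoc y 1 : Fin (m+1) → ℂ) i - q * (Fin.snoc y 1 : Fin (m+1) → ℂ) j ≠ 0 := by
    intro i j hij
    induction i using Fin.lastCases with
    | last =>
      induction j using Fin.lastCases with
      | last => exact absurd rfl hij
      | cast j => simpa using h3 j
    | cast i =>
      induction j using Fin.lastCases with
      | last => simpa using h2 i
      | cast j =>
        simpa using h5 i j (fun h => hij (congrArg Fin.castSucc h))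
  have hden4 : ∀ i j : Fin (m + 1), i < j →
      ((Fin.snoc y 1 : Fin (m+1) → ℂ) i * (Fin.snoc y 1 : Fin (m+1) → ℂ) j - 1) *
        (1 - t * (Fin.snoc y 1 : Fin (m+1) → ℂ) i * (Fin.snoc y 1 : Fin (m+1) → ℂ) j) ≠ 0 := by
    intro i j hij
    induction i using Fin.lastCases with
    | last => exact absurd hij (Fin.le_last j).not_gt
    | cast i =>
      induction j using Fin.lastCases with
      | last =>
        simp only [Fin.snoc_castSucc, Fin.snoc_last, mul_one]
        exact mul_ne_zero (sub_ne_zero.mpr (h1 i)) (h4 i)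
      | cast j =>
        have hij' : i < j := by simpa using hij
        simpa using mul_ne_zero (h8 i j hij') (h9 i j hij')
  -- continuity of G at 1
  have hcont : ContinuousAt G 1 := by
    rw [hG]
    apply ContinuousAt.mul
    apply ContinuousAt.mul
    apply ContinuousAt.mul
    apply ContinuousAt.mul
    · exact continuousAt_const
    · apply contAt_prod
      intro i _
      apply contAt_prod
      intro j _
      by_cases hij : i = j
      · simp only [hij, ne_eq, not_true_eq_false, if_false]
        exact continuousAt_const
      · simp only [ne_eq, hij, not_false_eq_true, if_true]
        exact ContinuousAt.div
          (((contSnoc m y i).sub (contSnoc m y j)).continuousAt)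
          (((contSnoc m y i).sub (continuous_const.mul (contSnoc m y j))).continuousAt)
          (hden2 i j hij)
    · apply ContinuousAt.mul continuousAt_const
      apply ContinuousAt.div continuousAt_id
      · fun_prop
      · refine mul_ne_zero ?_ ?_
        · norm_num
        · simpa using ht
    · apply contAt_prod
      intro i _
      apply contAt_prod
      intro j _
      by_cases hij : i < j
      · simp only [if_pos hij]
        exact ContinuousAt.div
          ((((contSnoc m y i).mul (contSnoc m y j)).sub continuous_const).mul
            (continuous_const.sub (((continuous_const.mul (contSnoc m y i)).mul
              (contSnoc m y j))))).continuousAt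
          ((((contSnoc m y i).mul (contSnoc m y j)).sub continuous_const).mul
            (continuous_const.sub (((continuous_const.mul (contSnoc m y i)).mul
              (contSnoc m y j))))).continuousAt
          (hden4 i j hij)
      · simp only [if_neg hij]
        exact continuousAt_const
    · apply contAt_prod
      intro i _
      apply contAt_prod
      intro j _
      exact (continuous_const.add ((contSnoc m y i).mul continuous_const)).continuousAt
  -- value of G at 1
  have hval : G 1 = Iden q t x y * (1 / (2 * (1 - q) * (1 - t)))
        * (∏ i, (1 - y i) * (1 - q * t * y i) / ((1 - q * y i) * (1 - t * y i)))
        * ∏ j, (1 + x j) := by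
    rw [hG, Iden]
    simp [Fin.prod_univ_castSucc, Fin.snoc_castSucc, Fin.snoc_last,
      (Fin.castSucc_lt_last _).ne, (Fin.castSucc_lt_last _).ne', Fin.castSucc_inj,
      Fin.castSucc_lt_last, Fin.castSucc_lt_castSucc_iff, (Fin.castSucc_lt_last _).not_gt,
      prod_mul_distrib]
    have A1 : (∏ i, (y i - 1)) ≠ 0 := prod_ne_zero_iff.mpr fun i _ => sub_ne_zero.mpr (h1 i)
    have A2 : (∏ i, (y i - q)) ≠ 0 := prod_ne_zero_iff.mpr fun i _ => h2 i
    have A3 : (∏ i, (1 - q * y i)) ≠ 0 := prod_ne_zero_iff.mpr fun i _ => h3 i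
    have A4 : (∏ i, (1 - t * y i)) ≠ 0 := prod_ne_zero_iff.mpr fun i _ => h4 i
    have A6 : (∏ i, (y i ^ 2 - 1)) ≠ 0 := prod_ne_zero_iff.mpr fun i _ => h6 i
    have A7 : (∏ i, (1 - t * y i ^ 2)) ≠ 0 := prod_ne_zero_iff.mpr fun i _ => h7 i
    set P1 := ∏ i : Fin m, ∏ j : Fin m, if i = j then 1 else (y i - y j) / (y i - q * y j) with hP1
    set Pa := ∏ i : Fin m, (y i - 1) with hPa
    set Pb := ∏ i : Fin m, (y i - q) with hPb
    set Pc := ∏ i : Fin m, (1 - y i) with hPc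
    set Pd := ∏ i : Fin m, (1 - q * y i) with hPd
    set Pe := ∏ i : Fin m, (y i ^ 2 - 1) with hPe
    set Pf := ∏ i : Fin m, (1 - t * y i ^ 2) with hPf
    set Pg := ∏ i : Fin m, (1 - q * t * y i) with hPg
    set Ph := ∏ i : Fin m, (1 - t * y i) with hPh
    set Py := ∏ i : Fin m, y i with hPy
    set P4 := ∏ i : Fin m, ∏ j : Fin m, if i < j then
        (y i * y j - q) * (1 - q * t * y i * y j) / ((y i * y j - 1) * (1 - t * y i * y j))
      else 1 with hP4
    set P5 := ∏ i : Fin m, ∏ j : Fin N, (1 + y i * x j) with hP5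
    set Px := ∏ j : Fin N, (1 + x j) with hPx
    have hmerge : Pa / Pb * (Pc / Pd) * (Pb * Pg / (Pa * Ph)) = Pc * Pg / (Pd * Ph) := by
      calc Pa / Pb * (Pc / Pd) * (Pb * Pg / (Pa * Ph))
          = Pa * Pc * (Pb * Pg) / (Pb * Pd * (Pa * Ph)) := by
            rw [div_mul_div_comm, div_mul_div_comm]
        _ = (Pa * Pb) * (Pc * Pg) / ((Pa * Pb) * (Pd * Ph)) := by
            rw [show Pa * Pc * (Pb * Pg) = (Pa * Pb) * (Pc * Pg) from by ring,
              show Pb * Pd * (Pa * Ph) = (Pa * Pb) * (Pd * Ph) from by ring]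
        _ = Pc * Pg / (Pd * Ph) := mul_div_mul_left _ _ (mul_ne_zero A1 A2)
    calc ((1 - q) ^ (m+1))⁻¹ * (P1 * (Pa / Pb) * (Pc / Pd)) *
          (Py / (Pe * Pf) * ((1 - t)⁻¹ * (1 + 1)⁻¹)) * (P4 * (Pb * Pg / (Pa * Ph))) * (P5 * Px)
        = ((1 - q) ^ (m+1))⁻¹ * P1 * (Py / (Pe * Pf)) * ((1 - t)⁻¹ * (1 + 1)⁻¹) * P4 * P5 * Px *
            (Pa / Pb * (Pc / Pd) * (Pb * Pg / (Pa * Ph))) := by ring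
      _ = ((1 - q) ^ m)⁻¹ * P1 * (Py / (Pe * Pf)) * P4 * P5 * ((1 - t)⁻¹ * ((1 - q)⁻¹ * 2⁻¹)) *
            (Pc * Pg / (Pd * Ph)) * Px := by rw [hmerge, pow_succ, mul_inv]; ring
      _ = _ := by ring
  have h := hcont.tendsto.mono_left (nhdsWithin_le_nhds (s := {(1:ℂ)}ᶜ))
  rw [hval] at h
  exact Tendsto.congr' (EventuallyEq.symm heq) h
end
end
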